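/- Let k be a positive integer and let G be a finite simple graph of order n at least 2k+2 that has no k-degenerate cut. If u is a vertex of G of degree at most k + √k/5, then u has at least k − 2k/25 − 2√k/5 neighbors whose degree in G is at least k + √k/5. -/

import Mathlib

/-- `S` is a (vertex) cut of `G`: deleting the vertices of `S` disconnects `G`. -/
def SimpleGraph.IsCutset {V : Type*} (G : SimpleGraph V) (S : Set V) : Prop :=
  ¬ (G.induce Sᶜ).Preconnected

/-- The set `S` induces a `k`-degenerate subgraph of `G`: every non-empty
subset `T` of `S` contains a vertex with at most `k` neighbors in `T`. -/
def SimpleGraph.DegenSet {V : Type*} (G : SimpleGraph V) (k : ℕ) (S : Set V) : Prop :=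
  ∀ T ⊆ S, T.Nonempty → ∃ v ∈ T, {w ∈ T | G.Adj v w}.ncard ≤ k

private lemma walk_stays {V : Type*} (G : SimpleGraph V) (C : Set V)
    (S : Set V) (hS : ∀ x y, x ∈ C → G.Adj x y → y ∉ C → y ∈ S) :
    ∀ (a b : ↥(Sᶜ)) (p : (G.induce Sᶜ).Walk a b), (a : V) ∈ C → (b : V) ∈ C := by
  intro a b p
  induction p with
  | nil => exact id
  | @cons a c b h p ih =>
    intro ha
    apply ih
    have hadj : G.Adj (a : V) (c : V) := h
    by_contra hc
    exact c.2 (hS _ _ ha hadj hc)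

private lemma exists_core {V : Type*} (G : SimpleGraph V) (k : ℕ)
    (hcut : ¬ ∃ S : Set V, G.IsCutset S ∧ G.DegenSet k S)
    (C : Set V) (x₀ : V) (hx₀ : x₀ ∈ C) (f : V) (hf1 : f ∉ C)
    (hf2 : ∀ y ∈ C, ¬ G.Adj y f) :
    ∃ R : Set V, R.Nonempty ∧ (∀ w ∈ R, w ∉ C ∧ ∃ y ∈ C, G.Adj y w) ∧
      ∀ w ∈ R, k + 1 ≤ {x ∈ R | G.Adj w x}.ncard := by
  classical
  set S : Set V := {z | z ∉ C ∧ ∃ y ∈ C, G.Adj y z} with hSdef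
  have hxS : x₀ ∈ Sᶜ := fun hx => hx.1 hx₀
  have hfS : f ∈ Sᶜ := fun hf => by
    obtain ⟨-, y, hy, hadj⟩ := hf
    exact hf2 y hy hadj
  have hcs : G.IsCutset S := by
    intro hpre
    obtain ⟨p⟩ := hpre ⟨x₀, hxS⟩ ⟨f, hfS⟩
    have := walk_stays G C S (fun x y hx hadj hy => ⟨hy, x, hx, hadj⟩) _ _ p hx₀
    exact hf1 this
  have hnd : ¬ G.DegenSet k S := fun hd => hcut ⟨S, hcs, hd⟩
  unfold SimpleGraph.DegenSet at hnd
  push_neg at hnd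
  obtain ⟨R, hRS, hQne, hQ⟩ := hnd
  exact ⟨R, hQne, fun w hw => hRS hw, fun w hw => hQ w hw⟩

private lemma core_card {V : Type*} [Fintype V] (G : SimpleGraph V) (k : ℕ) (R : Set V)
    (hne : R.Nonempty) (hdeg : ∀ w ∈ R, k + 1 ≤ {x ∈ R | G.Adj w x}.ncard) :
    k + 2 ≤ R.ncard := by
  obtain ⟨v, hv⟩ := hne
  have h1 : {x ∈ R | G.Adj v x} ⊆ R \ {v} := by
    rintro x ⟨hxR, hadj⟩
    refine ⟨hxR, ?_⟩
    simp only [Set.mem_singleton_iff]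
    rintro rfl
    exact G.irrefl hadj
  have h2 := Set.ncard_le_ncard h1 (Set.toFinite _)
  rw [Set.ncard_diff_singleton_of_mem hv] at h2
  have h3 := hdeg v hv
  have h4 : 1 ≤ R.ncard := (Set.ncard_pos (Set.toFinite _)).mpr ⟨v, hv⟩
  omega

set_option maxHeartbeats 2000000 in
theorem stmt4 {V : Type*} [Fintype V] (G : SimpleGraph V) [DecidableRel G.Adj]
    (k : ℕ) (hk : 1 ≤ k) (hn : 2 * k + 2 ≤ Fintype.card V)
    (hcut : ¬ ∃ S : Set V, G.IsCutset S ∧ G.DegenSet k S)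
    (u : V) (hu : (G.degree u : ℝ) ≤ (k : ℝ) + Real.sqrt k / 5) :
    (k : ℝ) - 2 * (k : ℝ) / 25 - 2 * Real.sqrt k / 5
      ≤ ({v ∈ G.neighborSet u | (k : ℝ) + Real.sqrt k / 5 ≤ (G.degree v : ℝ)}.ncard : ℝ) := by
  classical
  set sr : ℝ := Real.sqrt k / 5 with hsrdef
  have hk0 : (0:ℝ) ≤ (k:ℝ) := by positivity
  have hk1 : (1:ℝ) ≤ (k:ℝ) := by exact_mod_cast hk
  have hsq : Real.sqrt k ^ 2 = (k:ℝ) := Real.sq_sqrt hk0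
  have hsqnn : (0:ℝ) ≤ Real.sqrt k := Real.sqrt_nonneg _
  have hsr0 : (0:ℝ) ≤ sr := by positivity
  have hsr2 : sr ^ 2 = (k:ℝ)/25 := by rw [hsrdef, div_pow, hsq]; norm_num
  have hsr_le_k : sr ≤ (k:ℝ) := by
    rw [hsrdef]
    nlinarith [sq_nonneg (Real.sqrt k - 5)]
  set H : Set V := {v ∈ G.neighborSet u | (k : ℝ) + sr ≤ (G.degree v : ℝ)} with hHdef
  suffices hmain : (k:ℝ) - 2*sr^2 - 2*sr ≤ (H.ncard : ℝ) by
    have e1 : 2*(k:ℝ)/25 = 2*sr^2 := by rw [hsr2]; ring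
    have e2 : (2:ℝ) * Real.sqrt k / 5 = 2*sr := by rw [hsrdef]; ring
    linarith
  -- ncard of neighbor sets
  have hNS : ∀ x : V, (G.neighborSet x).ncard = G.degree x := by
    intro x
    rw [Set.ncard_eq_toFinset_card']
    simp [SimpleGraph.neighborFinset_def, SimpleGraph.degree]
  -- degree of u as nat bound
  have hdegu2k : G.degree u ≤ 2*k := by
    have : (G.degree u : ℝ) ≤ 2*(k:ℝ) := by linarith
    exact_mod_cast this
  -- first far vertex
  have hB0 : (insert u (G.neighborFinset u)).card < Fintype.card V := by
    have h1 : (insert u (G.neighborFinset u)).card ≤ G.degree u + 1 :=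
      Finset.card_insert_le _ _
    omega
  obtain ⟨f₀, hf₀⟩ : ∃ f₀, f₀ ∉ insert u (G.neighborFinset u) := by
    by_contra hco
    push_neg at hco
    have : (Finset.univ : Finset V) ⊆ insert u (G.neighborFinset u) := fun x _ => hco x
    have := Finset.card_le_card this
    rw [Finset.card_univ] at this
    omega
  obtain ⟨T, hTne, hTb, hTdeg⟩ := exists_core G k hcut {u} u rfl f₀
    (by simp only [Finset.mem_insert, SimpleGraph.mem_neighborFinset, not_or] at hf₀
        exact fun h => hf₀.1 h)
    (by simp only [Finset.mem_insert, SimpleGraph.mem_neighborFinset, not_or] at hf₀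
        intro y hy hadj
        simp only [Set.mem_singleton_iff] at hy
        subst hy
        exact hf₀.2 hadj)
  -- basic facts about T
  have hTsub : T ⊆ G.neighborSet u := by
    intro w hw
    obtain ⟨-, y, hy, hadj⟩ := hTb w hw
    simp only [Set.mem_singleton_iff] at hy
    subst hy
    exact hadj
  have ht2 : k + 2 ≤ T.ncard := core_card G k T hTne hTdeg
  have htu : T.ncard ≤ G.degree u := by
    rw [← hNS u]
    exact Set.ncard_le_ncard hTsub (Set.toFinite _)
  have htuR : (T.ncard : ℝ) ≤ (G.degree u : ℝ) := by exact_mod_cast htu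
  have ht2R : (k:ℝ) + 2 ≤ (T.ncard : ℝ) := by exact_mod_cast ht2
  have hsr_ge2 : (2:ℝ) ≤ sr := by linarith
  -- low vertices of T
  set A : Set V := {x ∈ T | (G.degree x : ℝ) < (k:ℝ) + sr} with hAdef
  have hAsubT : A ⊆ T := fun x hx => hx.1
  have hTAH : T \ A ⊆ H := by
    rintro x ⟨hxT, hxA⟩
    refine ⟨hTsub hxT, ?_⟩
    by_contra hlt
    push_neg at hlt
    exact hxA ⟨hxT, hlt⟩
  -- integer parameters
  set t : ℕ := T.ncard with htdef
  set τ : ℕ := t - (k+2) with hτdef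
  set m : ℕ := ⌈sr⌉₊ - 2 with hmdef
  set j : ℕ := τ + m with hjdef
  have hm2 : 2 ≤ ⌈sr⌉₊ := by
    have h2 : ((2:ℕ):ℝ) ≤ ((⌈sr⌉₊ : ℕ) : ℝ) := le_trans (by exact_mod_cast hsr_ge2) (Nat.le_ceil sr)
    exact_mod_cast h2
  have hmR : (m:ℝ) = (⌈sr⌉₊ : ℝ) - 2 := by
    rw [hmdef]
    push_cast [Nat.cast_sub hm2]
    ring
  have hm_ge : sr - 2 ≤ (m:ℝ) := by
    have := Nat.le_ceil sr
    rw [hmR]; linarith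
  have hm_le : (m:ℝ) ≤ sr - 1 := by
    have := Nat.ceil_lt_add_one hsr0
    rw [hmR]; linarith
  have hτR : (τ:ℝ) = (t:ℝ) - ((k:ℝ)+2) := by
    rw [hτdef]
    push_cast [Nat.cast_sub ht2]
    ring
  have hτ_le : (τ:ℝ) ≤ sr - 2 := by rw [hτR]; linarith
  have hjR : (j:ℝ) = (τ:ℝ) + (m:ℝ) := by exact_mod_cast rfl
  have hj_le : (j:ℝ) ≤ 2*sr - 3 := by rw [hjR]; linarith
  by_cases hAj : j ≤ A.ncard
  case neg =>
    -- few low vertices: T \ A is already big enough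
    have haj : A.ncard + 1 ≤ j := by omega
    have hasubt : A.ncard ≤ t := Set.ncard_le_ncard hAsubT (Set.toFinite _)
    have hdiff : (T \ A).ncard = t - A.ncard := Set.ncard_diff hAsubT (Set.toFinite _)
    have hHge : (T \ A).ncard ≤ H.ncard := Set.ncard_le_ncard hTAH (Set.toFinite _)
    have hdiffR : ((T \ A).ncard : ℝ) = (t:ℝ) - (A.ncard:ℝ) := by
      rw [hdiff]
      push_cast [Nat.cast_sub hasubt]
      ring
    have hHgeR : ((T \ A).ncard : ℝ) ≤ (H.ncard : ℝ) := by exact_mod_cast hHge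
    have hajR : (A.ncard : ℝ) + 1 ≤ (j:ℝ) := by exact_mod_cast haj
    -- H ≥ t - a ≥ t - j + 1 = (k+2) - m + 1 ≥ k + 4 - sr
    have : (k:ℝ) + 4 - sr ≤ (H.ncard : ℝ) := by
      rw [hjR, hτR] at hajR
      linarith
    nlinarith
  case pos =>
    -- select J ⊆ A of size j
    have hAfin : A.Finite := Set.toFinite _
    have hAcard : A.ncard = hAfin.toFinset.card := Set.ncard_eq_toFinset_card A hAfin
    obtain ⟨J, hJA, hJcard⟩ := Finset.exists_subset_card_eq (s := hAfin.toFinset) (n := j) (by omega)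
    have hJsubA : ∀ x ∈ J, x ∈ A := fun x hx => (Set.Finite.mem_toFinset _).mp (hJA hx)
    have hJsubT : ∀ x ∈ J, x ∈ T := fun x hx => (hJsubA x hx).1
    have huNu : u ∉ G.neighborSet u := fun h => G.irrefl h
    have huT : u ∉ T := fun h => huNu (hTsub h)
    have huJ : u ∉ J := fun h => huT (hJsubT u h)
    -- external neighborhoods
    set Ev : V → Finset V := fun v => G.neighborFinset v \ insert u (G.neighborFinset u)
      with hEvdef
    set EJ : Finset V := J.biUnion Ev with hEJdef
    have hEv : ∀ v ∈ J, (Ev v).card + (k+2) ≤ G.degree v := by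
      intro v hv
      have hvT : v ∈ T := hJsubT v hv
      have hsplit : (Ev v).card
          + (G.neighborFinset v ∩ insert u (G.neighborFinset u)).card
          = G.degree v := by
        simpa [hEvdef] using
          Finset.card_sdiff_add_card_inter (G.neighborFinset v) (insert u (G.neighborFinset u))
      have hI : k + 2 ≤ (G.neighborFinset v ∩ insert u (G.neighborFinset u)).card := by
        have hTN : k + 1 ≤ {x ∈ T | G.Adj v x}.ncard := hTdeg v hvT
        have hfin : ({x ∈ T | G.Adj v x} : Set V).Finite := Set.toFinite _
        have hueq : u ∉ hfin.toFinset := by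
          rw [Set.Finite.mem_toFinset]
          rintro ⟨hu', -⟩
          exact huT hu'
        have hins : insert u hfin.toFinset ⊆
            G.neighborFinset v ∩ insert u (G.neighborFinset u) := by
          intro x hx
          rcases Finset.mem_insert.mp hx with rfl | hx2
          · refine Finset.mem_inter.mpr ⟨?_, Finset.mem_insert_self _ _⟩
            rw [SimpleGraph.mem_neighborFinset]
            exact (hTsub hvT).symm
          · rw [Set.Finite.mem_toFinset] at hx2
            obtain ⟨hxT, hadj⟩ := hx2
            refine Finset.mem_inter.mpr ⟨?_, ?_⟩
            · rw [SimpleGraph.mem_neighborFinset]; exact hadj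
            · exact Finset.mem_insert_of_mem (by
                rw [SimpleGraph.mem_neighborFinset]; exact hTsub hxT)
        have hcard := Finset.card_le_card hins
        rw [Finset.card_insert_of_notMem hueq] at hcard
        have : {x ∈ T | G.Adj v x}.ncard = hfin.toFinset.card :=
          Set.ncard_eq_toFinset_card _ hfin
        omega
      omega
    have hEvR : ∀ v ∈ J, ((Ev v).card : ℝ) ≤ sr - 2 := by
      intro v hv
      have hlow := (hJsubA v hv).2
      have h1 := hEv v hv
      have h1R : ((Ev v).card : ℝ) + ((k:ℝ)+2) ≤ (G.degree v : ℝ) := by exact_mod_cast h1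
      linarith
    have hEJR : (EJ.card : ℝ) ≤ (j:ℝ) * (sr - 2) := by
      have h1 : EJ.card ≤ ∑ v ∈ J, (Ev v).card := Finset.card_biUnion_le
      have h1R : (EJ.card : ℝ) ≤ ∑ v ∈ J, ((Ev v).card : ℝ) := by
        calc (EJ.card : ℝ) ≤ ((∑ v ∈ J, (Ev v).card : ℕ) : ℝ) := by exact_mod_cast h1
        _ = ∑ v ∈ J, ((Ev v).card : ℝ) := by push_cast; ring
      have h2 := Finset.sum_le_card_nsmul J (fun v => ((Ev v).card : ℝ)) (sr - 2) hEvR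
      rw [hJcard] at h2
      simp only [nsmul_eq_mul] at h2
      linarith
    -- second far vertex
    set BIG : Finset V := insert u (G.neighborFinset u ∪ EJ) with hBIGdef
    have hBIGcard : BIG.card ≤ 1 + G.degree u + EJ.card := by
      have h1 : BIG.card ≤ (G.neighborFinset u ∪ EJ).card + 1 := Finset.card_insert_le _ _
      have h2 := Finset.card_union_le (G.neighborFinset u) EJ
      have h3 : (G.neighborFinset u).card = G.degree u := rfl
      omega
    have hBIGlt : BIG.card < Fintype.card V := by
      have hcardR : (BIG.card : ℝ) ≤ 1 + (G.degree u:ℝ) + (EJ.card:ℝ) := by exact_mod_cast hBIGcard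
      have hj2 : (j:ℝ)*(sr-2) ≤ (2*sr-3)*(sr-2) :=
        mul_le_mul_of_nonneg_right hj_le (by linarith)
      have hlt : (BIG.card : ℝ) < 2*(k:ℝ)+2 := by nlinarith [hcardR, hu, hj2, hsr2, hsr_ge2, hEJR]
      have hnR : 2*(k:ℝ)+2 ≤ (Fintype.card V : ℝ) := by exact_mod_cast hn
      exact_mod_cast lt_of_lt_of_le hlt hnR
    obtain ⟨f₁, hf₁⟩ : ∃ f₁, f₁ ∉ BIG := by
      by_contra hco
      push_neg at hco
      have h1 : (Finset.univ : Finset V) ⊆ BIG := fun x _ => hco x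
      have h2 := Finset.card_le_card h1
      rw [Finset.card_univ] at h2
      omega
    set C₁ : Set V := insert u (↑J : Set V) with hC₁def
    have hf₁N : f₁ ∉ G.neighborFinset u := fun h =>
      hf₁ (Finset.mem_insert_of_mem (Finset.mem_union_left _ h))
    have hf₁u : f₁ ≠ u := fun h => hf₁ (h ▸ Finset.mem_insert_self _ _)
    have hf₁1 : f₁ ∉ C₁ := by
      rw [hC₁def]
      rintro (h | h)
      · exact hf₁u h
      · refine hf₁N ?_
        rw [SimpleGraph.mem_neighborFinset]
        exact hTsub (hJsubT f₁ h)
    have hf₁2 : ∀ y ∈ C₁, ¬ G.Adj y f₁ := by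
      intro y hy hadj
      rcases Set.mem_insert_iff.mp hy with rfl | hyJ
      · exact hf₁N (by rwa [SimpleGraph.mem_neighborFinset])
      · have hyJ' : y ∈ J := hyJ
        have hfnb : f₁ ∈ G.neighborFinset y := by rwa [SimpleGraph.mem_neighborFinset]
        by_cases hin : f₁ ∈ insert u (G.neighborFinset u)
        · rcases Finset.mem_insert.mp hin with h1 | h2
          · exact hf₁u h1
          · exact hf₁N h2
        · have hmem : f₁ ∈ Ev y := by
            rw [hEvdef]
            exact Finset.mem_sdiff.mpr ⟨hfnb, hin⟩
          exact hf₁ (Finset.mem_insert_of_mem (Finset.mem_union_right _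
            (Finset.mem_biUnion.mpr ⟨y, hyJ', hmem⟩)))
    obtain ⟨R, hRne, hRb, hRdeg⟩ := exists_core G k hcut C₁ u (Set.mem_insert _ _) f₁ hf₁1 hf₁2
    have hR2 : k + 2 ≤ R.ncard := core_card G k R hRne hRdeg
    -- every vertex of R that lies in T is high
    have hhigh : ∀ w ∈ R, w ∈ T → (k:ℝ) + sr ≤ (G.degree w : ℝ) := by
      intro w hwR hwT
      by_contra hlow
      push_neg at hlow
      have hwC : w ∉ C₁ := (hRb w hwR).1
      have hwJ : w ∉ J := fun hw => hwC (Set.mem_insert_of_mem _ (by exact hw))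
      have hJnw : (J.filter (fun x => ¬ G.Adj w x)).card ≤ τ := by
        have hTfin : T.Finite := Set.toFinite _
        have hsub2 : J.filter (fun x => ¬ G.Adj w x) ⊆
            (hTfin.toFinset \ G.neighborFinset w).erase w := by
          intro x hx
          obtain ⟨hxJ, hnadj⟩ := Finset.mem_filter.mp hx
          refine Finset.mem_erase.mpr ⟨?_, Finset.mem_sdiff.mpr ⟨?_, ?_⟩⟩
          · rintro rfl; exact hwJ hxJ
          · rw [Set.Finite.mem_toFinset]; exact hJsubT x hxJ
          · rw [SimpleGraph.mem_neighborFinset]; exact hnadj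
        have hc2 := Finset.card_le_card hsub2
        have hwmem : w ∈ hTfin.toFinset \ G.neighborFinset w := by
          refine Finset.mem_sdiff.mpr ⟨?_, ?_⟩
          · rw [Set.Finite.mem_toFinset]; exact hwT
          · rw [SimpleGraph.mem_neighborFinset]; exact fun h => G.irrefl h
        have herase := Finset.card_erase_of_mem hwmem
        have hsd : (hTfin.toFinset \ G.neighborFinset w).card
            + (hTfin.toFinset ∩ G.neighborFinset w).card = hTfin.toFinset.card :=
          Finset.card_sdiff_add_card_inter _ _
        have hTN : k + 1 ≤ (hTfin.toFinset ∩ G.neighborFinset w).card := by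
          have h0 := hTdeg w hwT
          have heq : {x ∈ T | G.Adj w x} = (↑(hTfin.toFinset ∩ G.neighborFinset w) : Set V) := by
            ext x
            constructor
            · rintro ⟨h1, h2⟩
              refine Finset.mem_coe.mpr (Finset.mem_inter.mpr
                ⟨(Set.Finite.mem_toFinset _).mpr h1, ?_⟩)
              rw [SimpleGraph.mem_neighborFinset]
              exact h2
            · intro hx
              obtain ⟨ha, hb⟩ := Finset.mem_inter.mp (Finset.mem_coe.mp hx)
              rw [SimpleGraph.mem_neighborFinset] at hb
              exact ⟨(Set.Finite.mem_toFinset _).mp ha, hb⟩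
          rw [heq, Set.ncard_coe_finset] at h0
          exact h0
        have hTf : hTfin.toFinset.card = t := (Set.ncard_eq_toFinset_card T hTfin).symm
        omega
      have hJw : m ≤ (J.filter (fun x => G.Adj w x)).card := by
        have hfc := Finset.card_filter_add_card_filter_not
          (s := J) (p := fun x => G.Adj w x)
        omega
      have hRwfin : ({x ∈ R | G.Adj w x} : Set V).Finite := Set.toFinite _
      have hRwcard : k + 1 ≤ hRwfin.toFinset.card := by
        have h0 := hRdeg w hwR
        rwa [Set.ncard_eq_toFinset_card _ hRwfin] at h0
      set Jw := J.filter (fun x => G.Adj w x) with hJwdef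
      have hdisj1 : Disjoint Jw hRwfin.toFinset := by
        rw [Finset.disjoint_left]
        intro x hxJ hxR
        have hx1 : x ∈ J := (Finset.mem_filter.mp hxJ).1
        have hx2 : x ∈ R := ((Set.Finite.mem_toFinset _).mp hxR).1
        exact (hRb x hx2).1 (Set.mem_insert_of_mem _ (by exact hx1))
      have huJw : u ∉ Jw ∪ hRwfin.toFinset := by
        intro h
        rcases Finset.mem_union.mp h with h1 | h2
        · exact huJ (Finset.mem_filter.mp h1).1
        · exact (hRb u ((Set.Finite.mem_toFinset _).mp h2).1).1 (Set.mem_insert _ _)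
      have hsubN : insert u (Jw ∪ hRwfin.toFinset) ⊆ G.neighborFinset w := by
        intro x hx
        rcases Finset.mem_insert.mp hx with rfl | hx2
        · rw [SimpleGraph.mem_neighborFinset]
          exact (hTsub hwT).symm
        · rcases Finset.mem_union.mp hx2 with h1 | h2
          · rw [SimpleGraph.mem_neighborFinset]; exact (Finset.mem_filter.mp h1).2
          · rw [SimpleGraph.mem_neighborFinset]; exact ((Set.Finite.mem_toFinset _).mp h2).2
      have hcardN := Finset.card_le_card hsubN
      rw [Finset.card_insert_of_notMem huJw, Finset.card_union_of_disjoint hdisj1] at hcardN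
      have hdegw : m + (k+1) + 1 ≤ G.degree w := by
        have hcN : Jw.card + hRwfin.toFinset.card + 1 ≤ G.degree w := hcardN
        omega
      have hdegwR : ((m:ℝ) + ((k:ℝ)+1) + 1) ≤ (G.degree w : ℝ) := by exact_mod_cast hdegw
      linarith
    -- main counting
    have hRsub : R ⊆ (T ∩ {x : V | (k:ℝ) + sr ≤ (G.degree x:ℝ)})
        ∪ ((G.neighborSet u) \ T) ∪ (↑EJ : Set V) := by
      intro w hwR
      obtain ⟨hwC, y, hyC, hadj⟩ := hRb w hwR
      have hwNuOr : w ∈ G.neighborSet u ∨ w ∈ (↑EJ : Set V) := by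
        rcases Set.mem_insert_iff.mp hyC with rfl | hyJ
        · exact Or.inl hadj
        · have hyJ' : y ∈ J := hyJ
          by_cases hin : w ∈ insert u (G.neighborFinset u)
          · rcases Finset.mem_insert.mp hin with h1 | h2
            · exact absurd (h1 ▸ Set.mem_insert _ _) hwC
            · exact Or.inl (by rwa [SimpleGraph.mem_neighborFinset] at h2)
          · refine Or.inr ?_
            have hmem : w ∈ Ev y := by
              rw [hEvdef]
              refine Finset.mem_sdiff.mpr ⟨?_, hin⟩
              rw [SimpleGraph.mem_neighborFinset]; exact hadj
            exact Finset.mem_coe.mpr (Finset.mem_biUnion.mpr ⟨y, hyJ', hmem⟩)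
      rcases hwNuOr with hNu | hEJm
      · by_cases hwT : w ∈ T
        · exact Or.inl (Or.inl ⟨hwT, hhigh w hwR hwT⟩)
        · exact Or.inl (Or.inr ⟨hNu, hwT⟩)
      · exact Or.inr hEJm
    have hc1 := Set.ncard_le_ncard hRsub (Set.toFinite _)
    have hc2 := Set.ncard_union_le ((T ∩ {x : V | (k:ℝ) + sr ≤ (G.degree x:ℝ)})
        ∪ ((G.neighborSet u) \ T)) (↑EJ : Set V)
    have hc3 := Set.ncard_union_le (T ∩ {x : V | (k:ℝ) + sr ≤ (G.degree x:ℝ)})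
        ((G.neighborSet u) \ T)
    have hc4 : (T ∩ {x : V | (k:ℝ) + sr ≤ (G.degree x:ℝ)}).ncard ≤ H.ncard := by
      apply Set.ncard_le_ncard _ (Set.toFinite _)
      rintro x ⟨hxT, hxD⟩
      exact ⟨hTsub hxT, hxD⟩
    have hc5 : ((G.neighborSet u) \ T).ncard = G.degree u - t := by
      rw [Set.ncard_diff hTsub (Set.toFinite _), hNS u]
    have hc6 : ((↑EJ : Set V)).ncard = EJ.card := Set.ncard_coe_finset _
    have hN1 : k + 2 ≤ H.ncard + (G.degree u - t) + EJ.card := by omega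
    have h1R : ((k:ℝ))+2 ≤ (H.ncard:ℝ) + ((G.degree u:ℝ) - (t:ℝ)) + (EJ.card:ℝ) := by
      have hcast : ((H.ncard + (G.degree u - t) + EJ.card : ℕ):ℝ)
          = (H.ncard:ℝ) + ((G.degree u:ℝ) - (t:ℝ)) + (EJ.card:ℝ) := by
        push_cast [Nat.cast_sub htu]
        ring
      have h := (Nat.cast_le (α := ℝ)).mpr hN1
      rw [hcast] at h
      exact_mod_cast h
    have hfin1 : (G.degree u:ℝ) - (t:ℝ) ≤ sr - 2 := by linarith
    have hj2 : (j:ℝ)*(sr-2) ≤ (2*sr-3)*(sr-2) :=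
      mul_le_mul_of_nonneg_right hj_le (by linarith)
    nlinarith [h1R, hEJR, hfin1, hj2, hsr_ge2]
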